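/- Linearity of the Gaussian conditional expectation used in Lucas' islands model: Let r and p be independent real-valued random variables on a probability space, with r Gaussian with mean μ_r and variance σ_r² and p Gaussian with mean μ_p and variance σ_p², where σ_r² + σ_p² > 0. Then the conditional expectation of r given the σ-algebra generated by r + p satisfies, almost surely, E[r ∣ r + p] = μ_r + (σ_r²/(σ_r² + σ_p²)) · ((r + p) − μ_r − μ_p). -/

import Mathlib

open MeasureTheory ProbabilityTheory NNReal Real

noncomputable def gpdf (m v x : ℝ) : ℝ :=
  (Real.sqrt (2 * π * v))⁻¹ * Real.exp (-(x - m)^2 / (2 * v))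

lemma gaussianPDFReal_eq_gpdf (m : ℝ) (v : ℝ≥0) :
    gaussianPDFReal m v = gpdf m (v : ℝ) := rfl

lemma gpdf_nonneg (m v x : ℝ) (hv : 0 ≤ v) : 0 ≤ gpdf m v x := by
  unfold gpdf
  positivity

lemma measurable_gpdf (m v : ℝ) : Measurable (gpdf m v) := by
  unfold gpdf
  fun_prop

lemma integral_gpdf {v : ℝ} (m : ℝ) (hv : 0 < v) : ∫ x, gpdf m v x = 1 := by
  have h := ProbabilityTheory.integral_gaussianPDFReal_eq_one m
    (v := v.toNNReal) (by simp [Real.toNNReal_eq_zero]; linarith)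
  rwa [gaussianPDFReal_eq_gpdf, Real.coe_toNNReal _ hv.le] at h

lemma integrable_gpdf {v : ℝ} (m : ℝ) (hv : 0 < v) : Integrable (gpdf m v) := by
  have h := ProbabilityTheory.integrable_gaussianPDFReal m v.toNNReal
  rwa [gaussianPDFReal_eq_gpdf, Real.coe_toNNReal _ hv.le] at h

lemma gpdf_eq (m v x : ℝ) :
    gpdf m v x = (Real.sqrt (2 * π * v))⁻¹ * Real.exp (-((2*v)⁻¹) * (x - m)^2) := by
  unfold gpdf
  ring_nf

lemma integrable_mul_gpdf {v : ℝ} (m : ℝ) (hv : 0 < v) :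
    Integrable (fun x => x * gpdf m v x) := by
  simp_rw [gpdf_eq]
  have hb : 0 < (2*v)⁻¹ := by positivity
  have h1 : Integrable (fun y : ℝ => (y + m) * Real.exp (-((2*v)⁻¹) * y^2)) := by
    simp_rw [add_mul]
    exact ((integrable_mul_exp_neg_mul_sq hb)).add
      ((integrable_exp_neg_mul_sq hb).const_mul m)
  have h2 := h1.comp_sub_right m
  simp only [sub_add_cancel] at h2
  exact (h2.const_mul ((Real.sqrt (2 * π * v))⁻¹)).congr (by
    filter_upwards with x
    ring)


lemma integral_mul_gpdf {v : ℝ} (m : ℝ) (hv : 0 < v) :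
    ∫ x, x * gpdf m v x = m := by
  have hb : 0 < (2*v)⁻¹ := by positivity
  have hodd : ∫ y : ℝ, y * Real.exp (-((2*v)⁻¹) * y^2) = 0 := by
    have h := integral_neg_eq_self (fun y : ℝ => y * Real.exp (-((2*v)⁻¹) * y^2)) volume
    simp only [neg_sq, neg_mul] at h
    rw [MeasureTheory.integral_neg] at h
    simp only [neg_mul]
    linarith
  have key : ∫ y : ℝ, (y + m) * gpdf m v (y + m) = m := by
    simp_rw [gpdf_eq, add_sub_cancel_right]
    have hint : ∀ y : ℝ, (y + m) * ((Real.sqrt (2 * π * v))⁻¹ * Real.exp (-((2*v)⁻¹) * y^2))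
        = (Real.sqrt (2 * π * v))⁻¹ * (y * Real.exp (-((2*v)⁻¹) * y^2))
          + m * ((Real.sqrt (2 * π * v))⁻¹ * Real.exp (-((2*v)⁻¹) * y^2)) := by
      intro y; ring
    simp_rw [hint]
    rw [MeasureTheory.integral_add
      ((integrable_mul_exp_neg_mul_sq hb).const_mul _)
      (((integrable_exp_neg_mul_sq hb).const_mul _).const_mul m),
      MeasureTheory.integral_const_mul, MeasureTheory.integral_const_mul, hodd, mul_zero, zero_add]
    have h1 : ∫ y : ℝ, (Real.sqrt (2 * π * v))⁻¹ * Real.exp (-((2*v)⁻¹) * y^2) = 1 := by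
      have := integral_gpdf m hv
      calc ∫ y : ℝ, (Real.sqrt (2 * π * v))⁻¹ * Real.exp (-((2*v)⁻¹) * y^2)
          = ∫ y : ℝ, gpdf m v (y + m) := by
            apply MeasureTheory.integral_congr_ae
            filter_upwards with y
            rw [gpdf_eq, add_sub_cancel_right]
        _ = ∫ y : ℝ, gpdf m v y := MeasureTheory.integral_add_right_eq_self _ m
        _ = 1 := this
    rw [h1, mul_one]
  calc ∫ x, x * gpdf m v x = ∫ y : ℝ, (y + m) * gpdf m v (y + m) :=
        (MeasureTheory.integral_add_right_eq_self (fun x => x * gpdf m v x) m).symm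
    _ = m := key

lemma gpdf_factor {vr vp : ℝ} (hvr : 0 < vr) (hvp : 0 < vp) (mr mp u y : ℝ) :
    gpdf mr vr (u - y) * gpdf mp vp y =
      gpdf (mr + mp) (vr + vp) u *
        gpdf (mp + (vp/(vr+vp))*(u - mr - mp)) (vr*vp/(vr+vp)) y := by
  have hS : 0 < vr + vp := by linarith
  have hτ : 0 < vr*vp/(vr+vp) := by positivity
  unfold gpdf
  have hconst : Real.sqrt (2 * π * vr) * Real.sqrt (2 * π * vp)
      = Real.sqrt (2 * π * (vr+vp)) * Real.sqrt (2 * π * (vr*vp/(vr+vp))) := by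
    rw [← Real.sqrt_mul (by positivity), ← Real.sqrt_mul (by positivity)]
    congr 1
    field_simp
  have hexp : Real.exp (-(u - y - mr)^2 / (2*vr)) * Real.exp (-(y - mp)^2 / (2*vp))
      = Real.exp (-(u - (mr+mp))^2 / (2*(vr+vp))) *
        Real.exp (-(y - (mp + (vp/(vr+vp))*(u - mr - mp)))^2 / (2*(vr*vp/(vr+vp)))) := by
    rw [← Real.exp_add, ← Real.exp_add]
    congr 1
    field_simp
    ring
  calc (Real.sqrt (2 * π * vr))⁻¹ * Real.exp (-(u - y - mr)^2 / (2*vr)) *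
        ((Real.sqrt (2 * π * vp))⁻¹ * Real.exp (-(y - mp)^2 / (2*vp)))
      = (Real.sqrt (2 * π * vr) * Real.sqrt (2 * π * vp))⁻¹ *
        (Real.exp (-(u - y - mr)^2 / (2*vr)) * Real.exp (-(y - mp)^2 / (2*vp))) := by
        rw [mul_inv]; ring
    _ = (Real.sqrt (2 * π * (vr+vp)) * Real.sqrt (2 * π * (vr*vp/(vr+vp))))⁻¹ *
        (Real.exp (-(u - (mr+mp))^2 / (2*(vr+vp))) *
         Real.exp (-(y - (mp + (vp/(vr+vp))*(u - mr - mp)))^2 / (2*(vr*vp/(vr+vp))))) := by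
        rw [hconst, hexp]
    _ = _ := by rw [mul_inv]; ring

lemma gpdf_core {vr vp : ℝ} (hvr : 0 < vr) (hvp : 0 < vp) (mr mp u : ℝ) :
    ∫ y, (u - y - (mr + vr/(vr+vp)*(u - mr - mp))) * (gpdf mr vr (u-y) * gpdf mp vp y) = 0 := by
  have hS : 0 < vr + vp := by linarith
  have hτ : 0 < vr*vp/(vr+vp) := by positivity
  set m' : ℝ := mp + (vp/(vr+vp))*(u - mr - mp) with hm'
  set τ : ℝ := vr*vp/(vr+vp) with hτdef
  have hA : u - (mr + vr/(vr+vp)*(u - mr - mp)) = m' := by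
    rw [hm']; field_simp; ring
  have hrw : ∀ y, (u - y - (mr + vr/(vr+vp)*(u - mr - mp))) * (gpdf mr vr (u-y) * gpdf mp vp y)
      = gpdf (mr+mp) (vr+vp) u * ((m' - y) * gpdf m' τ y) := by
    intro y
    rw [gpdf_factor hvr hvp mr mp u y]
    rw [show u - y - (mr + vr/(vr+vp)*(u - mr - mp)) = m' - y by linarith [hA]]
    ring
  simp_rw [hrw]
  rw [MeasureTheory.integral_const_mul]
  have : ∫ y, (m' - y) * gpdf m' τ y = 0 := by
    have h1 : ∀ y, (m' - y) * gpdf m' τ y = m' * gpdf m' τ y - y * gpdf m' τ y := by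
      intro y; ring
    simp_rw [h1]
    rw [MeasureTheory.integral_sub ((integrable_gpdf m' hτ).const_mul m')
      (integrable_mul_gpdf m' hτ), MeasureTheory.integral_const_mul,
      integral_gpdf m' hτ, integral_mul_gpdf m' hτ, mul_one, sub_self]
  rw [this, mul_zero]

lemma gaussianReal_withDensity {v : ℝ≥0} (m : ℝ) (hv : v ≠ 0) :
    gaussianReal m v
      = volume.withDensity (fun x => ((gpdf m (v:ℝ) x).toNNReal : ENNReal)) := by
  rw [gaussianReal_of_var_ne_zero m hv]
  congr 1

lemma integral_gaussianReal_eq {v : ℝ≥0} (m : ℝ) (hv : v ≠ 0) (f : ℝ → ℝ) :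
    ∫ x, f x ∂(gaussianReal m v) = ∫ x, f x * gpdf m (v:ℝ) x := by
  rw [gaussianReal_withDensity m hv,
    integral_withDensity_eq_integral_smul (by exact (measurable_gpdf m (v:ℝ)).real_toNNReal) f]
  congr 1
  ext x
  simp only [NNReal.smul_def, smul_eq_mul, Real.coe_toNNReal _ (gpdf_nonneg m (v:ℝ) x (by positivity))]
  ring

lemma integrable_gaussianReal_iff {v : ℝ≥0} (m : ℝ) (hv : v ≠ 0) (f : ℝ → ℝ) :
    Integrable f (gaussianReal m v) ↔ Integrable (fun x => f x * gpdf m (v:ℝ) x) := by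
  rw [gaussianReal_withDensity m hv,
    integrable_withDensity_iff_integrable_coe_smul
      (by exact (measurable_gpdf m (v:ℝ)).real_toNNReal)]
  constructor <;> intro h <;> refine h.congr (Filter.Eventually.of_forall fun x => ?_) <;>
    simp only [NNReal.smul_def, smul_eq_mul, Real.coe_toNNReal _ (gpdf_nonneg m (v:ℝ) x (by positivity))] <;>
    ring

lemma integrable_id_gaussianReal (m : ℝ) (v : ℝ≥0) :
    Integrable (fun x => x) (gaussianReal m v) := by
  by_cases hv : v = 0
  · rw [hv, gaussianReal_zero_var]
    have hae : (fun x : ℝ => x) =ᵐ[Measure.dirac m] fun _ => m := by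
      rw [MeasureTheory.ae_dirac_eq]
      exact Filter.eventually_pure.2 rfl
    exact (integrable_const m).congr hae.symm
  · rw [integrable_gaussianReal_iff m hv]
    exact integrable_mul_gpdf m (by positivity)

lemma abs_mul_gpdf_integrable {v : ℝ} (m : ℝ) (hv : 0 < v) :
    Integrable (fun y => |y - m| * gpdf m v y) := by
  have h0 : Integrable (fun z : ℝ => |z| * gpdf 0 v z) := by
    refine (integrable_mul_gpdf 0 hv).abs.congr (Filter.Eventually.of_forall fun z => ?_)
    show |z * gpdf 0 v z| = |z| * gpdf 0 v z
    rw [abs_mul, abs_of_nonneg (gpdf_nonneg 0 v z hv.le)]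
  have h1 := h0.comp_sub_right m
  refine h1.congr (Filter.Eventually.of_forall fun y => ?_)
  simp only [gpdf, sub_zero]

lemma integral_abs_mul_gpdf {v : ℝ} (m : ℝ) (hv : 0 < v) :
    ∫ y, |y - m| * gpdf m v y = ∫ z, |z| * gpdf 0 v z := by
  have := MeasureTheory.integral_sub_right_eq_self (μ := volume) (fun z => |z| * gpdf 0 v z) m
  rw [← this]
  congr 1
  ext y
  simp only [gpdf, sub_zero]

lemma measurable_f0 {vr vp : ℝ} (mr mp : ℝ) {B : Set ℝ} (hB : MeasurableSet B) :
    Measurable (fun z : ℝ × ℝ =>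
      B.indicator (fun _ => (1:ℝ)) z.1 *
        ((z.1 - z.2 - (mr + vr/(vr+vp)*(z.1 - mr - mp))) * gpdf mr vr (z.1 - z.2)) *
        gpdf mp vp z.2) := by
  refine (Measurable.mul (Measurable.mul ?_ ?_) ?_)
  · exact ((measurable_const.indicator hB).comp measurable_fst)
  · exact ((measurable_fst.sub measurable_snd).sub
      (measurable_const.add (((measurable_fst.sub measurable_const).sub
        measurable_const).const_mul _))).mul
      ((measurable_gpdf mr vr).comp (measurable_fst.sub measurable_snd))
  · exact (measurable_gpdf mp vp).comp measurable_snd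

lemma integrable_f0 {vr vp : ℝ} (hvr : 0 < vr) (hvp : 0 < vp) (mr mp : ℝ)
    {B : Set ℝ} (hB : MeasurableSet B) :
    Integrable (fun z : ℝ × ℝ =>
      B.indicator (fun _ => (1:ℝ)) z.1 *
        ((z.1 - z.2 - (mr + vr/(vr+vp)*(z.1 - mr - mp))) * gpdf mr vr (z.1 - z.2)) *
        gpdf mp vp z.2) ((volume : Measure ℝ).prod volume) := by
  have hS : 0 < vr + vp := by linarith
  have hτ : 0 < vr*vp/(vr+vp) := by positivity
  set τ : ℝ := vr*vp/(vr+vp) with hτdef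
  set m' : ℝ → ℝ := fun u => mp + (vp/(vr+vp))*(u - mr - mp) with hm'def
  have hA : ∀ u, u - (mr + vr/(vr+vp)*(u - mr - mp)) = m' u := by
    intro u; rw [hm'def]; field_simp; ring
  -- pointwise rewrite of the integrand
  have hrw : ∀ u y,
      B.indicator (fun _ => (1:ℝ)) u *
        ((u - y - (mr + vr/(vr+vp)*(u - mr - mp))) * gpdf mr vr (u - y)) *
        gpdf mp vp y
      = (B.indicator (fun _ => (1:ℝ)) u * gpdf (mr+mp) (vr+vp) u) *
          ((m' u - y) * gpdf (m' u) τ y) := by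
    intro u y
    have h1 : u - y - (mr + vr/(vr+vp)*(u - mr - mp)) = m' u - y := by
      have := hA u; linarith
    have h2 := gpdf_factor hvr hvp mr mp u y
    calc B.indicator (fun _ => (1:ℝ)) u *
          ((u - y - (mr + vr/(vr+vp)*(u - mr - mp))) * gpdf mr vr (u - y)) * gpdf mp vp y
        = B.indicator (fun _ => (1:ℝ)) u * (m' u - y) *
            (gpdf mr vr (u - y) * gpdf mp vp y) := by rw [h1]; ring
      _ = B.indicator (fun _ => (1:ℝ)) u * (m' u - y) *
            (gpdf (mr+mp) (vr+vp) u * gpdf (m' u) τ y) := by rw [h2]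
      _ = _ := by ring
  rw [MeasureTheory.integrable_prod_iff
    (measurable_f0 mr mp hB).aestronglyMeasurable]
  constructor
  · filter_upwards with u
    simp only [hrw]
    exact (((integrable_gpdf (m' u) hτ).const_mul (m' u)).sub
      (integrable_mul_gpdf (m' u) hτ)).congr (Filter.Eventually.of_forall fun y => by
        simp only [Pi.sub_apply]; ring)
      |>.const_mul _
  · set K : ℝ := ∫ z, |z| * gpdf 0 τ z with hK
    have hK0 : 0 ≤ K := MeasureTheory.integral_nonneg fun z => by
      have := gpdf_nonneg 0 τ z hτ.le
      positivity
    have hbound : ∀ u, (∫ y, ‖B.indicator (fun _ => (1:ℝ)) u *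
        ((u - y - (mr + vr/(vr+vp)*(u - mr - mp))) * gpdf mr vr (u - y)) *
        gpdf mp vp y‖) ≤ K * gpdf (mr+mp) (vr+vp) u := by
      intro u
      have hind : |B.indicator (fun _ => (1:ℝ)) u| ≤ 1 := by
        by_cases h : u ∈ B <;> simp [Set.indicator_apply, h]
      have hptw : ∀ y, ‖B.indicator (fun _ => (1:ℝ)) u *
          ((u - y - (mr + vr/(vr+vp)*(u - mr - mp))) * gpdf mr vr (u - y)) *
          gpdf mp vp y‖ ≤ gpdf (mr+mp) (vr+vp) u * (|y - m' u| * gpdf (m' u) τ y) := by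
        intro y
        rw [hrw u y, Real.norm_eq_abs, abs_mul, abs_mul, abs_mul,
          abs_of_nonneg (gpdf_nonneg (mr+mp) (vr+vp) u hS.le),
          abs_of_nonneg (gpdf_nonneg (m' u) τ y hτ.le), abs_sub_comm]
        have h1 : 0 ≤ gpdf (mr+mp) (vr+vp) u := gpdf_nonneg _ _ _ hS.le
        have h2 : 0 ≤ gpdf (m' u) τ y := gpdf_nonneg _ _ _ hτ.le
        have h3 : 0 ≤ |y - m' u| := abs_nonneg _
        nlinarith [mul_le_mul_of_nonneg_right hind
          (mul_nonneg h1 (mul_nonneg h3 h2))]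
      calc (∫ y, ‖B.indicator (fun _ => (1:ℝ)) u *
          ((u - y - (mr + vr/(vr+vp)*(u - mr - mp))) * gpdf mr vr (u - y)) *
          gpdf mp vp y‖)
          ≤ ∫ y, gpdf (mr+mp) (vr+vp) u * (|y - m' u| * gpdf (m' u) τ y) := by
            apply MeasureTheory.integral_mono_of_nonneg
              (Filter.Eventually.of_forall fun y => norm_nonneg _)
              ((abs_mul_gpdf_integrable (m' u) hτ).const_mul _)
              (Filter.Eventually.of_forall hptw)
        _ = gpdf (mr+mp) (vr+vp) u * ∫ y, |y - m' u| * gpdf (m' u) τ y :=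
            MeasureTheory.integral_const_mul _ _
        _ = K * gpdf (mr+mp) (vr+vp) u := by
            rw [integral_abs_mul_gpdf (m' u) hτ, ← hK]; ring
    have hKint : Integrable (fun u => K * gpdf (mr+mp) (vr+vp) u) :=
      (integrable_gpdf (mr+mp) hS).const_mul K
    refine hKint.mono' ?_ ?_
    · have hm0 : Measurable (fun z : ℝ × ℝ =>
          B.indicator (fun _ => (1:ℝ)) z.1 *
            ((z.1 - z.2 - (mr + vr/(vr+vp)*(z.1 - mr - mp))) * gpdf mr vr (z.1 - z.2)) *
            gpdf mp vp z.2) := measurable_f0 mr mp hB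
      exact (hm0.norm.stronglyMeasurable.integral_prod_right').aestronglyMeasurable
    · filter_upwards with u
      rw [Real.norm_eq_abs, abs_of_nonneg
        (MeasureTheory.integral_nonneg fun y => norm_nonneg _)]
      exact hbound u

lemma integrable_fst_prod' {μ ν : Measure ℝ} [IsProbabilityMeasure μ] [IsProbabilityMeasure ν]
    (h : Integrable (fun x => x) μ) :
    Integrable (fun z : ℝ × ℝ => z.1) (μ.prod ν) := by
  have hmap : (μ.prod ν).map Prod.fst = μ := by
    rw [Measure.map_fst_prod]; simp
  have h2 : Integrable (fun x : ℝ => x) ((μ.prod ν).map Prod.fst) := by rw [hmap]; exact h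
  exact (integrable_map_measure h2.aestronglyMeasurable measurable_fst.aemeasurable).mp h2

lemma integrable_snd_prod' {μ ν : Measure ℝ} [IsProbabilityMeasure μ] [IsProbabilityMeasure ν]
    (h : Integrable (fun x => x) ν) :
    Integrable (fun z : ℝ × ℝ => z.2) (μ.prod ν) := by
  have hmap : (μ.prod ν).map Prod.snd = ν := by
    rw [Measure.map_snd_prod]; simp
  have h2 : Integrable (fun x : ℝ => x) ((μ.prod ν).map Prod.snd) := by rw [hmap]; exact h
  exact (integrable_map_measure h2.aestronglyMeasurable measurable_snd.aemeasurable).mp h2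

lemma ae_eq_const_of_map_dirac {Ω : Type*} [MeasurableSpace Ω] {P : Measure Ω}
    [IsProbabilityMeasure P] {X : Ω → ℝ} (hX : Measurable X) {a : ℝ}
    (h : P.map X = Measure.dirac a) : ∀ᵐ ω ∂P, X ω = a := by
  have : P (X ⁻¹' {a}ᶜ) = 0 := by
    have := Measure.map_apply hX (MeasurableSet.compl (measurableSet_singleton a)) (μ := P)
    rw [h] at this
    rw [this.symm] at *
    rw [this]
    simp [Measure.dirac_apply' _ (measurableSet_singleton a).compl]
  filter_upwards [MeasureTheory.measure_eq_zero_iff_ae_notMem.mp this] with ω hω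
  simpa using hω

/-- Linearity of the Gaussian conditional expectation (as used in Lucas'
islands model): if `r` and `p` are independent Gaussian random variables with
means `μr, μp` and variances `σr2, σp2` (with `σr2 + σp2 > 0`), then almost
surely `E[r ∣ r + p] = μr + (σr2/(σr2 + σp2)) * ((r + p) - μr - μp)`. -/
theorem gaussian_condexp_linear
    {Ω : Type*} [MeasurableSpace Ω] (P : Measure Ω) [IsProbabilityMeasure P]
    (r p : Ω → ℝ) (hr : Measurable r) (hp : Measurable p)
    (h_indep : IndepFun r p P)
    (μr μp : ℝ) (σr2 σp2 : ℝ≥0)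
    (hr_law : P.map r = gaussianReal μr σr2)
    (hp_law : P.map p = gaussianReal μp σp2)
    (h_pos : 0 < σr2 + σp2) :
    P[r | MeasurableSpace.comap (fun ω => r ω + p ω) Real.measurableSpace]
      =ᵐ[P] fun ω =>
        μr + ((σr2 : ℝ) / ((σr2 : ℝ) + (σp2 : ℝ))) * ((r ω + p ω) - μr - μp) := by
  set S : Ω → ℝ := fun ω => r ω + p ω with hSdef
  have hS : Measurable S := hr.add hp
  have hm : MeasurableSpace.comap S Real.measurableSpace ≤ _ := hS.comap_le
  have hfr : Integrable r P := by
    have h1 : Integrable (fun x : ℝ => x) (P.map r) := by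
      rw [hr_law]; exact integrable_id_gaussianReal μr σr2
    exact (integrable_map_measure h1.aestronglyMeasurable hr.aemeasurable).mp h1
  have hfp : Integrable p P := by
    have h1 : Integrable (fun x : ℝ => x) (P.map p) := by
      rw [hp_law]; exact integrable_id_gaussianReal μp σp2
    exact (integrable_map_measure h1.aestronglyMeasurable hp.aemeasurable).mp h1
  set c : ℝ := (σr2 : ℝ) / ((σr2 : ℝ) + (σp2 : ℝ)) with hcdef
  have hSm : @Measurable Ω ℝ (MeasurableSpace.comap S Real.measurableSpace)
      Real.measurableSpace S := fun t ht => ⟨t, ht, rfl⟩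
  by_cases hvr : σr2 = 0
  · -- degenerate r
    have hrae : ∀ᵐ ω ∂P, r ω = μr := by
      apply ae_eq_const_of_map_dirac hr
      rw [hr_law, hvr, gaussianReal_zero_var]
    have hc0 : c = 0 := by rw [hcdef, hvr]; simp
    have h1 := condExp_congr_ae (m := MeasurableSpace.comap S Real.measurableSpace)
      (μ := P) (g := fun _ => μr) hrae
    refine h1.trans ?_
    rw [condExp_const hm]
    filter_upwards with ω
    rw [hc0]
    ring
  · by_cases hvp : σp2 = 0
    · -- degenerate p
      have hpae : ∀ᵐ ω ∂P, p ω = μp := by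
        apply ae_eq_const_of_map_dirac hp
        rw [hp_law, hvp, gaussianReal_zero_var]
      have hrae : r =ᵐ[P] fun ω => S ω - μp := by
        filter_upwards [hpae] with ω hω
        rw [hSdef]; simp [hω]
      have h1 := condExp_congr_ae (m := MeasurableSpace.comap S Real.measurableSpace)
        (μ := P) hrae
      refine h1.trans ?_
      have h2 : P[(fun ω => S ω - μp) | MeasurableSpace.comap S Real.measurableSpace]
          = fun ω => S ω - μp := by
        refine condExp_of_stronglyMeasurable hm ?_ ?_
        · exact (hSm.sub measurable_const).stronglyMeasurable
        · exact ((hfr.add hfp).sub (integrable_const μp)).congr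
            (Filter.Eventually.of_forall fun ω => by simp [hSdef])
      rw [h2]
      have hc1 : c = 1 := by
        rw [hcdef, hvp]
        have : (σr2:ℝ) ≠ 0 := by exact_mod_cast hvr
        field_simp
        simp
      filter_upwards with ω
      rw [hc1]
      ring
    · -- main case
      have hvrR : (0:ℝ) < (σr2:ℝ) := by
        have := pos_iff_ne_zero.mpr hvr
        exact_mod_cast this
      have hvpR : (0:ℝ) < (σp2:ℝ) := by
        have := pos_iff_ne_zero.mpr hvp
        exact_mod_cast this
      set G : Ω → ℝ := fun ω => μr + c * (S ω - μr - μp) with hGdef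
      have hGint : Integrable G P := by
        have h1 : Integrable (fun ω => c * r ω + c * p ω) P :=
          (hfr.const_mul c).add (hfp.const_mul c)
        exact ((integrable_const (μr - c * (μr + μp))).add h1).congr
          (Filter.Eventually.of_forall fun ω => by simp only [hGdef, hSdef, Pi.add_apply]; ring)
      have hGm : @Measurable Ω ℝ (MeasurableSpace.comap S Real.measurableSpace)
          Real.measurableSpace G :=
        (((hSm.sub measurable_const).sub measurable_const).const_mul c).const_add μr
      have key : ∀ B : Set ℝ, MeasurableSet B →
          ∫ ω in S ⁻¹' B, (r ω - G ω) ∂P = 0 := by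
        intro B hB
        set F : ℝ × ℝ → ℝ := fun z =>
          B.indicator (fun _ => (1:ℝ)) (z.1 + z.2) *
            (z.1 - (μr + c * (z.1 + z.2 - μr - μp))) with hFdef
        have hFmeas : Measurable F := by
          refine Measurable.mul ?_ ?_
          · exact (measurable_const.indicator hB).comp (measurable_fst.add measurable_snd)
          · exact measurable_fst.sub (measurable_const.add
              (((measurable_fst.add measurable_snd).sub measurable_const).sub
                measurable_const |>.const_mul c))
        have hjoint : P.map (fun ω => (r ω, p ω))
            = (gaussianReal μr σr2).prod (gaussianReal μp σp2) := by
          rw [← hr_law, ← hp_law]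
          exact (indepFun_iff_map_prod_eq_prod_map_map hr.aemeasurable hp.aemeasurable).mp h_indep
        -- integrability of F wrt the product of the two gaussians
        have hint1 : Integrable (fun z : ℝ × ℝ => z.1)
            ((gaussianReal μr σr2).prod (gaussianReal μp σp2)) :=
          integrable_fst_prod' (integrable_id_gaussianReal μr σr2)
        have hint2 : Integrable (fun z : ℝ × ℝ => z.2)
            ((gaussianReal μr σr2).prod (gaussianReal μp σp2)) :=
          integrable_snd_prod' (integrable_id_gaussianReal μp σp2)
        have hgaff : Integrable (fun z : ℝ × ℝ => μr + c * (z.1 + z.2 - μr - μp))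
            ((gaussianReal μr σr2).prod (gaussianReal μp σp2)) := by
          have h1 : Integrable (fun z : ℝ × ℝ => c * z.1 + c * z.2)
              ((gaussianReal μr σr2).prod (gaussianReal μp σp2)) :=
            (hint1.const_mul c).add (hint2.const_mul c)
          exact ((integrable_const (μr - c * (μr + μp))).add h1).congr
            (Filter.Eventually.of_forall fun z => by simp only [Pi.add_apply]; ring)
        have hFint : Integrable F ((gaussianReal μr σr2).prod (gaussianReal μp σp2)) := by
          refine (hint1.abs.add hgaff.abs).mono' hFmeas.aestronglyMeasurable ?_
          filter_upwards with z
          rw [hFdef]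
          simp only [Real.norm_eq_abs]
          have hind : |B.indicator (fun _ => (1:ℝ)) (z.1 + z.2)| ≤ 1 := by
            by_cases h : (z.1 + z.2) ∈ B <;> simp [Set.indicator_apply, h]
          rw [abs_mul]
          calc |B.indicator (fun _ => (1:ℝ)) (z.1 + z.2)| *
                |z.1 - (μr + c * (z.1 + z.2 - μr - μp))|
              ≤ 1 * |z.1 - (μr + c * (z.1 + z.2 - μr - μp))| :=
                mul_le_mul_of_nonneg_right hind (abs_nonneg _)
            _ = |z.1 - (μr + c * (z.1 + z.2 - μr - μp))| := one_mul _
            _ ≤ |z.1| + |μr + c * (z.1 + z.2 - μr - μp)| := abs_sub _ _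
        -- the inner integral after a change of variables
        have inner_eq : ∀ y : ℝ, ∫ x, F (x, y) ∂(gaussianReal μr σr2)
            = ∫ u, B.indicator (fun _ => (1:ℝ)) u *
                ((u - y - (μr + c * (u - μr - μp))) * gpdf μr (σr2:ℝ) (u - y)) := by
          intro y
          rw [integral_gaussianReal_eq μr hvr (fun x => F (x, y))]
          have := (MeasureTheory.integral_sub_right_eq_self (μ := volume)
            (fun x => F (x, y) * gpdf μr (σr2:ℝ) x) y).symm
          rw [this]
          congr 1
          ext u
          rw [hFdef]
          simp only [sub_add_cancel]
          ring
        -- the swap integrability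
        have hswap : Integrable (Function.uncurry fun (y u : ℝ) =>
            B.indicator (fun _ => (1:ℝ)) u *
              ((u - y - (μr + c * (u - μr - μp))) * gpdf μr (σr2:ℝ) (u - y)) *
              gpdf μp (σp2:ℝ) y) ((volume : Measure ℝ).prod volume) := by
          have h0 := integrable_f0 hvrR hvpR μr μp hB
          exact h0.swap
        calc ∫ ω in S ⁻¹' B, (r ω - G ω) ∂P
            = ∫ ω, Set.indicator (S ⁻¹' B) (fun ω => r ω - G ω) ω ∂P :=
              (MeasureTheory.integral_indicator (hS hB)).symm
          _ = ∫ ω, F (r ω, p ω) ∂P := by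
              apply MeasureTheory.integral_congr_ae
              filter_upwards with ω
              rw [hFdef, hGdef]
              by_cases h : S ω ∈ B
              · have h' : r ω + p ω ∈ B := h
                simp only [Set.indicator_apply, Set.mem_preimage, h, if_true, h', hSdef]
                simp [h']
              · have h' : ¬ (r ω + p ω) ∈ B := h
                simp only [Set.indicator_apply, Set.mem_preimage, h, if_false, hSdef]
                simp [h']
          _ = ∫ z, F z ∂(P.map (fun ω => (r ω, p ω))) :=
              (MeasureTheory.integral_map (hr.prodMk hp).aemeasurable
                hFmeas.aestronglyMeasurable).symm
          _ = ∫ z, F z ∂((gaussianReal μr σr2).prod (gaussianReal μp σp2)) := by rw [hjoint]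
          _ = ∫ y, ∫ x, F (x, y) ∂(gaussianReal μr σr2) ∂(gaussianReal μp σp2) :=
              MeasureTheory.integral_prod_symm F hFint
          _ = ∫ y, (∫ u, B.indicator (fun _ => (1:ℝ)) u *
                ((u - y - (μr + c * (u - μr - μp))) * gpdf μr (σr2:ℝ) (u - y)))
                ∂(gaussianReal μp σp2) := by
              apply MeasureTheory.integral_congr_ae
              filter_upwards with y
              exact inner_eq y
          _ = ∫ y, (∫ u, B.indicator (fun _ => (1:ℝ)) u *
                ((u - y - (μr + c * (u - μr - μp))) * gpdf μr (σr2:ℝ) (u - y)))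
                * gpdf μp (σp2:ℝ) y := by
              rw [integral_gaussianReal_eq μp hvp]
          _ = ∫ y, ∫ u, B.indicator (fun _ => (1:ℝ)) u *
                ((u - y - (μr + c * (u - μr - μp))) * gpdf μr (σr2:ℝ) (u - y)) *
                gpdf μp (σp2:ℝ) y := by
              apply MeasureTheory.integral_congr_ae
              filter_upwards with y
              exact (MeasureTheory.integral_mul_const _ _).symm
          _ = ∫ u, ∫ y, B.indicator (fun _ => (1:ℝ)) u *
                ((u - y - (μr + c * (u - μr - μp))) * gpdf μr (σr2:ℝ) (u - y)) *
                gpdf μp (σp2:ℝ) y := MeasureTheory.integral_integral_swap hswap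
          _ = 0 := by
              have : ∀ u : ℝ, ∫ y, B.indicator (fun _ => (1:ℝ)) u *
                  ((u - y - (μr + c * (u - μr - μp))) * gpdf μr (σr2:ℝ) (u - y)) *
                  gpdf μp (σp2:ℝ) y = 0 := by
                intro u
                have hcore := gpdf_core hvrR hvpR μr μp u
                have hrw : ∀ y : ℝ, B.indicator (fun _ => (1:ℝ)) u *
                    ((u - y - (μr + c * (u - μr - μp))) * gpdf μr (σr2:ℝ) (u - y)) *
                    gpdf μp (σp2:ℝ) y
                    = B.indicator (fun _ => (1:ℝ)) u *
                      ((u - y - (μr + (σr2:ℝ)/((σr2:ℝ)+(σp2:ℝ))*(u - μr - μp))) *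
                        (gpdf μr (σr2:ℝ) (u-y) * gpdf μp (σp2:ℝ) y)) := by
                  intro y
                  rw [hcdef]
                  ring
                simp_rw [hrw]
                rw [MeasureTheory.integral_const_mul, hcore, mul_zero]
              simp_rw [this]
              exact MeasureTheory.integral_zero _ _
      -- conclude via uniqueness of conditional expectation
      refine (ae_eq_condExp_of_forall_setIntegral_eq hm hfr
        (fun s _ _ => hGint.integrableOn) ?_ ?_).symm
      · intro s hs _
        obtain ⟨B, hB, rfl⟩ := hs
        have h0 := key B hB
        rw [MeasureTheory.integral_sub hfr.integrableOn hGint.integrableOn] at h0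
        linarith
      · exact (hGm.stronglyMeasurable).aestronglyMeasurable
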